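/- Fix positive integers n, u and let a be uniform on (0,1). Define F(a) to be the least positive integer k such that there exists c coprime to k with a ∈ [c/k, c/k + 1/(nu)]. Then for every k ≤ ⌊√(nu)⌋, Pr[F(a) = k] = φ(k)/(nu). -/

import Mathlib

open MeasureTheory

/-- `k` claims `a`: `a` is at most `1/(nu)` above a reduced fraction with
denominator `k`. -/
def claims (n u k : ℕ) (a : ℝ) : Prop :=
  ∃ c : ℕ, Nat.Coprime c k ∧ (c : ℝ) / k ≤ a ∧ a ≤ (c : ℝ) / k + 1 / ((n : ℝ) * u)

/-- `F(a) = k`: `k` is the least positive integer claiming `a`. -/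
def FvalEq (n u : ℕ) (a : ℝ) (k : ℕ) : Prop :=
  claims n u k a ∧ ∀ j : ℕ, 0 < j → j < k → ¬claims n u j a

/-- For `a` uniform on `(0,1)` and `k ≤ ⌊√(nu)⌋`, `Pr[F(a) = k] = φ(k)/(nu)`. -/
lemma key_not_claims (n u k j : ℕ) (hj : 0 < j) (hjk : j < k) (hkk : k * k ≤ n * u)
    (a : ℝ) (hka : claims n u k a) : ¬ claims n u j a := by
  obtain ⟨c, hc, hc1, hc2⟩ := hka
  rintro ⟨d, hd, hd1, hd2⟩
  set N : ℝ := (n : ℝ) * u with hNdef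
  have hk0 : 0 < k := hj.trans hjk
  have hNk : (k : ℝ) * j < N := by
    have h1 : k * j < k * k := by
      exact Nat.mul_lt_mul_left hk0 |>.mpr hjk
    have h2 : k * j < n * u := lt_of_lt_of_le h1 hkk
    have h3 : ((k * j : ℕ) : ℝ) < ((n * u : ℕ) : ℝ) := by exact_mod_cast h2
    push_cast at h3
    linarith
  have hkR : (0:ℝ) < k := by exact_mod_cast hk0
  have hjR : (0:ℝ) < j := by exact_mod_cast hj
  have hN : (0:ℝ) < N := lt_trans (by positivity) hNk
  have hne : c * j ≠ d * k := by
    intro h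
    have hdvd : k ∣ c * j := h ▸ ⟨d, (mul_comm d k)⟩
    have hkj : k ∣ j := (Nat.Coprime.symm hc).dvd_of_dvd_mul_left hdvd
    exact absurd (Nat.le_of_dvd hj hkj) (not_le.mpr hjk)
  have habs : (1:ℝ) ≤ |(c:ℝ) * j - (d:ℝ) * k| := by
    have h0 : (c:ℤ) * j ≠ (d:ℤ) * k := by exact_mod_cast hne
    have h1 : (1:ℤ) ≤ |(c:ℤ)*j - (d:ℤ)*k| := Int.one_le_abs (sub_ne_zero.mpr h0)
    have h2 : (1:ℝ) ≤ |((c:ℤ)*j - (d:ℤ)*k : ℤ)| := by exact_mod_cast h1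
    calc (1:ℝ) ≤ _ := h2
      _ = |(c:ℝ) * j - (d:ℝ) * k| := by push_cast; ring_nf
  have hdiff : |(c:ℝ)/k - (d:ℝ)/j| ≤ 1/N := by
    rw [abs_le]
    constructor <;> linarith
  have heq : (c:ℝ)/k - (d:ℝ)/j = ((c:ℝ)*j - (d:ℝ)*k) / ((k:ℝ)*j) := by
    field_simp
  have hlt : 1/N < |(c:ℝ)/k - (d:ℝ)/j| := by
    rw [heq, abs_div, abs_of_pos (by positivity : (0:ℝ) < (k:ℝ)*j)]
    have h3 : 1/N < 1/((k:ℝ)*j) := by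
      apply one_div_lt_one_div_of_lt (by positivity) hNk
    have h4 : 1/((k:ℝ)*j) ≤ |(c:ℝ)*j - (d:ℝ)*k| / ((k:ℝ)*j) := by
      gcongr
    linarith
  linarith

theorem stmt_12 (n u : ℕ) (hn : 0 < n) (hu : 0 < u) (k : ℕ) (hk : 0 < k)
    (hksqrt : k ≤ Nat.sqrt (n * u)) :
    volume {a ∈ Set.Ioo (0 : ℝ) 1 | FvalEq n u a k} =
      ENNReal.ofReal ((Nat.totient k : ℝ) / ((n : ℝ) * u)) := by
  have hkk : k * k ≤ n * u := Nat.le_sqrt.mp hksqrt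
  set N : ℝ := (n : ℝ) * u with hNdef
  have hN : (0:ℝ) < N := by positivity
  have hkR : (0:ℝ) < k := by exact_mod_cast hk
  set T : Finset ℕ := (Finset.range k).filter k.Coprime with hT
  have hset : {a ∈ Set.Ioo (0 : ℝ) 1 | FvalEq n u a k}
      = ⋃ c ∈ T, Set.Ioo (0:ℝ) 1 ∩ Set.Icc ((c:ℝ)/k) ((c:ℝ)/k + 1/N) := by
    ext a
    simp only [Set.mem_setOf_eq, Set.mem_iUnion, hT, Finset.mem_filter, Finset.mem_range,
      Set.mem_inter_iff, Set.mem_Ioo, Set.mem_Icc, exists_prop]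
    constructor
    · rintro ⟨⟨ha0, ha1⟩, ⟨c, hc, h1, h2⟩, -⟩
      have hck : c < k := by
        by_contra h
        push_neg at h
        have h1' : (1:ℝ) ≤ (c:ℝ)/k := by
          rw [le_div_iff₀ hkR]
          have : (k:ℝ) ≤ c := by exact_mod_cast h
          linarith
        linarith
      exact ⟨c, ⟨hck, hc.symm⟩, ⟨ha0, ha1⟩, h1, h2⟩
    · rintro ⟨c, ⟨hck, hc⟩, hIoo, h1, h2⟩
      exact ⟨hIoo, ⟨c, hc.symm, h1, h2⟩,
        fun j hj hjk => key_not_claims n u k j hj hjk hkk a ⟨c, hc.symm, h1, h2⟩⟩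
  rw [hset]
  rcases eq_or_lt_of_le (show 1 ≤ k from hk) with hk1 | hk2
  · -- k = 1
    have hk1' : k = 1 := hk1.symm
    subst hk1'
    have hT1 : T = {0} := by decide
    rw [hT1]
    simp only [Finset.mem_singleton, Set.iUnion_iUnion_eq_left, Nat.cast_zero, Nat.cast_one,
      zero_div, zero_add, Nat.totient_one, Nat.cast_one]
    rcases eq_or_lt_of_le (Nat.one_le_iff_ne_zero.mpr (by positivity : n * u ≠ 0)) with hnu1 | hnu2
    · -- n * u = 1
      have hN1 : N = 1 := by
        rw [hNdef]
        have : ((n*u : ℕ):ℝ) = 1 := by rw [← hnu1]; norm_num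
        push_cast at this
        linarith
      rw [hN1]
      have hss : Set.Ioo (0:ℝ) 1 ∩ Set.Icc 0 (1/1) = Set.Ioo 0 1 := by
        apply Set.inter_eq_self_of_subset_left
        intro x hx
        simp only [Set.mem_Ioo] at hx
        simp only [Set.mem_Icc]
        norm_num
        exact ⟨hx.1.le, hx.2.le⟩
      rw [hss, Real.volume_Ioo]
      norm_num
    · -- 2 ≤ n * u
      have hN2 : (2:ℝ) ≤ N := by
        have : ((2:ℕ):ℝ) ≤ ((n*u : ℕ):ℝ) := by exact_mod_cast hnu2
        push_cast at this
        linarith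
      have hIoc : Set.Ioo (0:ℝ) 1 ∩ Set.Icc 0 (1/N) = Set.Ioc 0 (1/N) := by
        ext x
        simp only [Set.mem_inter_iff, Set.mem_Ioo, Set.mem_Icc, Set.mem_Ioc]
        constructor
        · rintro ⟨⟨h1, h2⟩, h3, h4⟩; exact ⟨h1, h4⟩
        · rintro ⟨h1, h2⟩
          have h5 : 1/N ≤ 1/2 := by
            apply one_div_le_one_div_of_le <;> linarith
          exact ⟨⟨h1, by linarith⟩, by linarith, h2⟩
      rw [hIoc, Real.volume_Ioc]
      norm_num
  · -- 2 ≤ k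
    have h2k : 2 ≤ k := hk2
    have hkN : (k:ℝ) < N := by
      have h1 : k < k * k := by nlinarith
      have h2 : k < n * u := lt_of_lt_of_le h1 hkk
      have h3 : ((k:ℕ):ℝ) < ((n*u:ℕ):ℝ) := by exact_mod_cast h2
      push_cast at h3
      linarith
    have hsub : ∀ c ∈ T, Set.Icc ((c:ℝ)/k) ((c:ℝ)/k + 1/N) ⊆ Set.Ioo (0:ℝ) 1 := by
      intro c hcT
      simp only [hT, Finset.mem_filter, Finset.mem_range] at hcT
      obtain ⟨hck, hc⟩ := hcT
      have hc1 : 1 ≤ c := by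
        rcases Nat.eq_zero_or_pos c with h | h
        · exfalso
          rw [h] at hc
          have : k = 1 := by simpa [Nat.coprime_zero_right] using hc
          omega
        · exact h
      have hcle : (c:ℝ) ≤ (k:ℝ) - 1 := by
        have : (c:ℝ) + 1 ≤ k := by exact_mod_cast hck
        linarith
      intro x hx
      simp only [Set.mem_Icc] at hx
      simp only [Set.mem_Ioo]
      constructor
      · have : (0:ℝ) < (c:ℝ)/k := by positivity
        linarith [hx.1]
      · have h1N : 1/N < 1/k := by
          apply one_div_lt_one_div_of_lt hkR hkN
        have : (c:ℝ)/k ≤ ((k:ℝ)-1)/k := by gcongr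
        have hkinv : ((k:ℝ)-1)/k = 1 - 1/k := by field_simp
        linarith [hx.2]
    have heqpieces : ∀ c ∈ T,
        Set.Ioo (0:ℝ) 1 ∩ Set.Icc ((c:ℝ)/k) ((c:ℝ)/k + 1/N)
          = Set.Icc ((c:ℝ)/k) ((c:ℝ)/k + 1/N) :=
      fun c hc => Set.inter_eq_self_of_subset_right (hsub c hc)
    rw [Set.iUnion₂_congr heqpieces]
    have hdisj0 : ∀ c d : ℕ, c < d →
        Disjoint (Set.Icc ((c:ℝ)/k) ((c:ℝ)/k + 1/N)) (Set.Icc ((d:ℝ)/k) ((d:ℝ)/k + 1/N)) := by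
      intro c d hlt
      have h1N : 1/N < 1/k := one_div_lt_one_div_of_lt hkR hkN
      have hcd' : (c:ℝ) + 1 ≤ d := by exact_mod_cast hlt
      rw [Set.disjoint_left]
      intro x hx hx'
      simp only [Set.mem_Icc] at hx hx'
      have h5 : ((c:ℝ)+1)/k ≤ (d:ℝ)/k := by gcongr
      have h3 : ((c:ℝ)+1)/k = (c:ℝ)/k + 1/k := by ring
      linarith [hx.2, hx'.1]
    have hdisj : (↑T : Set ℕ).PairwiseDisjoint
        (fun c : ℕ => Set.Icc ((c:ℝ)/k) ((c:ℝ)/k + 1/N)) := by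
      intro c _ d _ hcd
      simp only [Function.onFun]
      rcases lt_or_gt_of_ne hcd with h | h
      · exact hdisj0 c d h
      · exact (hdisj0 d c h).symm
    rw [measure_biUnion_finset hdisj (fun c _ => measurableSet_Icc)]
    have hvol : ∀ c ∈ T, volume (Set.Icc ((c:ℝ)/k) ((c:ℝ)/k + 1/N))
        = ENNReal.ofReal (1/N) := by
      intro c _
      rw [Real.volume_Icc]
      ring_nf
    rw [Finset.sum_congr rfl hvol, Finset.sum_const]
    have hcard : T.card = k.totient := rfl
    rw [hcard, nsmul_eq_mul]
    rw [show (Nat.totient k : ℝ)/N = (Nat.totient k : ℝ) * (1/N) by ring,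
      ENNReal.ofReal_mul (by positivity), ENNReal.ofReal_natCast]
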